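/- If a vector β ∈ ℝⁿ belongs to the cone Γ_k (i.e. σ_1(β) > 0, ..., σ_k(β) > 0), then the sum of any n-k+1 of its coordinates is nonnegative. -/

import Mathlib

open Finset

/-- The `k`-th elementary symmetric polynomial of a vector in `ℝⁿ`. -/
noncomputable def esym (n k : ℕ) (x : Fin n → ℝ) : ℝ :=
  ∑ t ∈ Finset.powersetCard k (Finset.univ : Finset (Fin n)), ∏ i ∈ t, x i

open Polynomial Multiset

namespace GammaAux

/-- every nonempty multiset of reals has a maximum element -/
lemma exists_max (T : Multiset ℝ) (hT : T ≠ 0) : ∃ a ∈ T, ∀ x ∈ T, x ≤ a := by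
  induction T using Multiset.induction_on with
  | empty => simp at hT
  | cons a s ih =>
    rcases eq_or_ne s 0 with rfl | hs
    · exact ⟨a, by simp⟩
    · obtain ⟨b, hb, hball⟩ := ih hs
      rcases le_total a b with h | h
      · exact ⟨b, Multiset.mem_cons_of_mem hb, by
          intro x hx; rcases Multiset.mem_cons.1 hx with rfl | hx
          · exact h
          · exact hball x hx⟩
      · exact ⟨a, Multiset.mem_cons_self a s, by
          intro x hx; rcases Multiset.mem_cons.1 hx with rfl | hx
          · exact le_rfl
          · exact (hball x hx).trans h⟩

lemma prod_nonneg (T : Multiset ℝ) (h : ∀ x ∈ T, 0 ≤ x) : 0 ≤ T.prod := by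
  induction T using Multiset.induction_on with
  | empty => simp
  | cons a s ih =>
    rw [Multiset.prod_cons]
    exact mul_nonneg (h a (Multiset.mem_cons_self a s))
      (ih fun x hx => h x (Multiset.mem_cons_of_mem hx))

lemma prod_pos (T : Multiset ℝ) (h : ∀ x ∈ T, 0 < x) : 0 < T.prod := by
  induction T using Multiset.induction_on with
  | empty => simp
  | cons a s ih =>
    rw [Multiset.prod_cons]
    exact mul_pos (h a (Multiset.mem_cons_self a s))
      (ih fun x hx => h x (Multiset.mem_cons_of_mem hx))

lemma esymm_nonneg (T : Multiset ℝ) (h : ∀ x ∈ T, 0 ≤ x) (j : ℕ) : 0 ≤ T.esymm j := by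
  rw [Multiset.esymm]
  apply Multiset.sum_nonneg
  intro x hx
  obtain ⟨u, hu, rfl⟩ := Multiset.mem_map.1 hx
  exact prod_nonneg u fun y hy => h y (Multiset.mem_of_le (Multiset.mem_powersetCard.1 hu).1 hy)

lemma esymm_pos (T : Multiset ℝ) (h : ∀ x ∈ T, 0 < x) (j : ℕ) (hj : j ≤ Multiset.card T) :
    0 < T.esymm j := by
  rw [Multiset.esymm]
  have hne : (T.powersetCard j).map Multiset.prod ≠ 0 := by
    rw [Ne, ← Multiset.card_eq_zero, Multiset.card_map, Multiset.card_powersetCard]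
    exact (Nat.choose_pos hj).ne'
  obtain ⟨x, hx⟩ := Multiset.exists_mem_of_ne_zero hne
  have hall : ∀ y ∈ (T.powersetCard j).map Multiset.prod, 0 < y := by
    intro y hy
    obtain ⟨u, hu, rfl⟩ := Multiset.mem_map.1 hy
    exact prod_pos u fun z hz => h z (Multiset.mem_of_le (Multiset.mem_powersetCard.1 hu).1 hz)
  calc (0:ℝ) < x := hall x hx
  _ ≤ _ := Multiset.single_le_sum (fun y hy => (hall y hy).le) x hx

end GammaAux

namespace GammaAux
open Polynomial

lemma eval_pos_of_coeffs (p : ℝ[X]) (h0 : 0 < p.coeff 0) (h : ∀ i, 0 ≤ p.coeff i)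
    {t : ℝ} (ht : 0 ≤ t) : 0 < p.eval t := by
  rw [eval_eq_sum_range]
  have hterm : ∀ i ∈ Finset.range (p.natDegree + 1), 0 ≤ p.coeff i * t ^ i := fun i _ =>
    mul_nonneg (h i) (pow_nonneg ht i)
  calc (0:ℝ) < p.coeff 0 * t ^ 0 := by simpa using h0
  _ ≤ _ := Finset.single_le_sum hterm (Finset.mem_range.2 (Nat.succ_pos _))

lemma eval_pos_of_coeffs' (p : ℝ[X]) (j : ℕ) (hj : 0 < p.coeff j) (h : ∀ i, 0 ≤ p.coeff i)
    {t : ℝ} (ht : 0 < t) : 0 < p.eval t := by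
  rw [eval_eq_sum_range]
  have hterm : ∀ i ∈ Finset.range (p.natDegree + 1), 0 ≤ p.coeff i * t ^ i := fun i _ =>
    mul_nonneg (h i) (pow_nonneg ht.le i)
  have hjmem : j ∈ Finset.range (p.natDegree + 1) :=
    Finset.mem_range.2 (Nat.lt_succ_of_le (le_natDegree_of_ne_zero hj.ne'))
  calc (0:ℝ) < p.coeff j * t ^ j := mul_pos hj (pow_pos ht j)
  _ ≤ _ := Finset.single_le_sum hterm hjmem

lemma splits_derivative {p : ℝ[X]} (hp : p.Splits) :
    (derivative p).Splits := by
  rcases eq_or_ne (derivative p) 0 with h | h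
  · rw [h]; exact Splits.zero
  have hd : p.natDegree ≠ 0 := fun h0 => h (derivative_of_natDegree_zero h0)
  rw [splits_iff_card_roots] at hp ⊢
  have h1 := p.card_roots_le_derivative
  have h2 := natDegree_derivative_le p
  have h3 := card_roots' (derivative p)
  omega

lemma splits_iterate_derivative {p : ℝ[X]} (hp : p.Splits) (d : ℕ) :
    (derivative^[d] p).Splits := by
  induction d with
  | zero => exact hp
  | succ d ih => rw [Function.iterate_succ_apply']; exact splits_derivative ih

/-- the polynomial with roots `-r`, `r ∈ T` -/
noncomputable def PM (T : Multiset ℝ) : ℝ[X] := (T.map fun r => X + C r).prod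

lemma PM_monic (T : Multiset ℝ) : (PM T).Monic :=
  monic_multiset_prod_of_monic _ _ fun r _ => monic_X_add_C r

lemma PM_natDegree (T : Multiset ℝ) : (PM T).natDegree = Multiset.card T := by
  rw [PM, natDegree_multiset_prod_of_monic _ (by
    intro f hf; obtain ⟨r, _, rfl⟩ := Multiset.mem_map.1 hf; exact monic_X_add_C r)]
  rw [Multiset.map_map]
  simp [Function.comp_def]

lemma PM_eq (T : Multiset ℝ) : PM T = ((T.map Neg.neg).map fun w => X - C w).prod := by
  rw [PM, Multiset.map_map]
  congr 1
  apply Multiset.map_congr rfl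
  intro r _
  simp [Function.comp_def, sub_neg_eq_add]

lemma PM_roots (T : Multiset ℝ) : (PM T).roots = T.map Neg.neg := by
  rw [PM_eq]; exact roots_multiset_prod_X_sub_C _

lemma PM_splits (T : Multiset ℝ) : (PM T).Splits := by
  rw [splits_iff_card_roots, PM_roots, PM_natDegree, Multiset.card_map]

lemma PM_coeff (T : Multiset ℝ) {j : ℕ} (hj : j ≤ Multiset.card T) :
    (PM T).coeff j = T.esymm (Multiset.card T - j) :=
  Multiset.prod_X_add_C_coeff T hj

end GammaAux

namespace GammaAux
open Polynomial

/-- all coefficients of `q.comp (X + C x)` are nonneg, when `q` splits with positive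
leading coefficient and all roots `≤ x`. -/
lemma comp_coeff_nonneg {q : ℝ[X]} (hq : q.Splits) (hlc : 0 < q.leadingCoeff)
    {x : ℝ} (hx : ∀ w ∈ q.roots, w ≤ x) (i : ℕ) : 0 ≤ (q.comp (X + C x)).coeff i := by
  have hrepr := Splits.eq_prod_roots hq
  have hcomp : q.comp (X + C x) = C q.leadingCoeff * PM (q.roots.map (fun w => x - w)) := by
    conv_lhs => rw [hrepr]
    rw [mul_comp, C_comp, multiset_prod_comp, PM, Multiset.map_map, Multiset.map_map]
    congr 2
    apply Multiset.map_congr rfl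
    intro w _
    simp only [Function.comp_apply, sub_comp, X_comp, C_comp, C_sub]
    ring
  rw [hcomp, coeff_C_mul]
  set T := q.roots.map (fun w => x - w) with hT
  rcases le_or_gt i (Multiset.card T) with hi | hi
  · rw [PM_coeff T hi]
    exact mul_nonneg hlc.le (esymm_nonneg T (by
      intro y hy
      obtain ⟨w, hw, rfl⟩ := Multiset.mem_map.1 hy
      exact sub_nonneg.2 (hx w hw)) _)
  · rw [coeff_eq_zero_of_natDegree_lt (by rwa [PM_natDegree]), mul_zero]

/-- Shift lemma : the roots of the derivative are bounded by any bound on the roots. -/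
lemma roots_derivative_le {q : ℝ[X]} (hq : q.Splits) (hlc : 0 < q.leadingCoeff)
    {x : ℝ} (hx : ∀ w ∈ q.roots, w ≤ x) {v : ℝ} (hv : v ∈ (derivative q).roots) : v ≤ x := by
  by_contra hvx
  push_neg at hvx
  have hq'0 : derivative q ≠ 0 := by
    intro h0; rw [h0] at hv; simp at hv
  have hvroot : (derivative q).IsRoot v := (mem_roots'.1 hv).2
  set p' := (derivative q).comp (X + C x) with hp'
  have hp'coeff : ∀ i, 0 ≤ p'.coeff i := by
    intro i
    have : p' = derivative (q.comp (X + C x)) := by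
      rw [derivative_comp, derivative_X_add_C, one_mul]
    rw [this, coeff_derivative]
    have := comp_coeff_nonneg hq hlc hx (i + 1)
    positivity
  have hp'ne : p' ≠ 0 := by
    intro h0
    apply hq'0
    have : (derivative q) = (p'.comp (X + C (-x))) := by
      rw [hp', comp_assoc]
      simp [comp_assoc]
    rw [this, h0, zero_comp]
  obtain ⟨j, hj⟩ : ∃ j, p'.coeff j ≠ 0 := by
    by_contra hall
    push_neg at hall
    exact hp'ne (Polynomial.ext fun i => by simp [hall i])
  have hjpos : 0 < p'.coeff j := (hp'coeff j).lt_of_ne (Ne.symm hj)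
  have heval : p'.eval (v - x) = 0 := by
    rw [hp', eval_comp]
    simpa using hvroot
  have := eval_pos_of_coeffs' p' j hjpos hp'coeff (t := v - x) (by linarith)
  rw [heval] at this
  exact lt_irrefl 0 this

end GammaAux

namespace GammaAux
open Polynomial

lemma mult_two_root_derivative {q : ℝ[X]} {w : ℝ} (h : 2 ≤ rootMultiplicity w q) :
    (derivative q).IsRoot w := by
  obtain ⟨u, hu⟩ : (X - C w) ^ 2 ∣ q :=
    dvd_trans (pow_dvd_pow _ h) (pow_rootMultiplicity_dvd q w)
  rw [hu, derivative_mul, derivative_pow]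
  simp [IsRoot]

lemma eval_nonpos_at_max_deriv_root {q : ℝ[X]} (hq : q.Splits)
    (hlc : 0 < q.leadingCoeff) {v : ℝ} (hv : v ∈ (derivative q).roots)
    (hmax : ∀ u ∈ (derivative q).roots, u ≤ v) : q.eval v ≤ 0 := by
  have hq'0 : derivative q ≠ 0 := by
    intro h0; rw [h0] at hv; simp at hv
  have hq0 : q ≠ 0 := fun h0 => hq'0 (by rw [h0]; simp)
  by_cases hvr : v ∈ q.roots
  · rw [(mem_roots'.1 hvr).2]
  -- at most one root of q exceeds v
  have claim1 : Multiset.card (q.roots.filter (fun w => v < w)) ≤ 1 := by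
    by_contra hc
    push_neg at hc
    set S := q.roots.filter (fun w => v < w) with hS
    obtain ⟨w1, hw1⟩ := Multiset.exists_mem_of_ne_zero
      (Multiset.card_pos.1 (by omega) : S ≠ 0)
    have hw1v : v < w1 := (Multiset.mem_filter.1 hw1).2
    have hcard : 1 ≤ Multiset.card (S.erase w1) := by
      rw [Multiset.card_erase_of_mem hw1, Nat.pred_eq_sub_one]; omega
    obtain ⟨w2, hw2⟩ := Multiset.exists_mem_of_ne_zero
      (Multiset.card_pos.1 (by omega) : S.erase w1 ≠ 0)
    rcases eq_or_ne w2 w1 with rfl | hne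
    · -- double root
      have hcount : 2 ≤ Multiset.count w2 S := by
        have h1 := Multiset.count_pos.2 hw2
        rw [Multiset.count_erase_self] at h1
        omega
      have hmult : 2 ≤ rootMultiplicity w2 q := by
        have : Multiset.count w2 S ≤ Multiset.count w2 q.roots := by
          rw [hS, Multiset.count_filter]
          split <;> omega
        rw [count_roots] at this
        omega
      have : w2 ∈ (derivative q).roots :=
        mem_roots'.2 ⟨hq'0, mult_two_root_derivative hmult⟩
      exact absurd (hmax w2 this) (not_le.2 hw1v)
    · -- two distinct roots > v : Rolle
      have hw2S : w2 ∈ S := Multiset.mem_of_mem_erase hw2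
      have hw2v : v < w2 := (Multiset.mem_filter.1 hw2S).2
      have hr1 : q.IsRoot w1 := (mem_roots'.1 (Multiset.mem_filter.1 hw1).1).2
      have hr2 : q.IsRoot w2 := (mem_roots'.1 (Multiset.mem_filter.1 hw2S).1).2
      have key : ∀ a b : ℝ, a < b → q.IsRoot a → q.IsRoot b → v < a → False := by
        intro a b hab ha hb hva
        obtain ⟨c, hc, hc0⟩ := exists_deriv_eq_zero (f := fun y => q.eval y) hab
          (q.continuous_aeval.continuousOn) (by show eval a q = eval b q; rw [ha.eq_zero, hb.eq_zero])
        have : c ∈ (derivative q).roots := mem_roots'.2 ⟨hq'0, by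
          have := hc0
          rwa [Polynomial.deriv] at this⟩
        exact absurd (hmax c this) (not_le.2 (lt_trans hva hc.1))
      rcases lt_or_gt_of_ne hne with h | h
      · exact key w2 w1 h hr2 hr1 hw2v
      · exact key w1 w2 h hr1 hr2 hw1v
  -- q has a root, and v is at most the max root
  have hdeg : 1 ≤ q.natDegree := by
    by_contra hd
    exact hq'0 (derivative_of_natDegree_zero (by omega))
  have hroots_ne : q.roots ≠ 0 := Multiset.card_pos.1 (by
    rw [(splits_iff_card_roots).1 hq]; omega)
  obtain ⟨xmax, hxm, hxmax⟩ := exists_max q.roots hroots_ne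
  have hvx : v ≤ xmax := roots_derivative_le hq hlc hxmax hv
  have hvxlt : v < xmax := hvx.lt_of_ne (fun h => hvr (h ▸ hxm))
  -- now compute the sign of eval
  have hrepr := Splits.eq_prod_roots hq
  have heval : q.eval v = q.leadingCoeff * ((q.roots.map fun w => v - w)).prod := by
    conv_lhs => rw [hrepr]
    rw [eval_mul, eval_C, eval_multiset_prod, Multiset.map_map]
    congr 2
    apply Multiset.map_congr rfl
    intro w _
    simp
  have hsplit : q.roots.filter (fun w => v < w) + q.roots.filter (fun w => ¬ v < w) = q.roots :=
    Multiset.filter_add_not _ _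
  have hS1 : 1 ≤ Multiset.card (q.roots.filter (fun w => v < w)) :=
    Multiset.card_pos_iff_exists_mem.2 ⟨xmax, Multiset.mem_filter.2 ⟨hxm, hvxlt⟩⟩
  obtain ⟨w0, hw0⟩ := Multiset.card_eq_one.1 (le_antisymm claim1 hS1)
  have hw0v : v < w0 := by
    have : w0 ∈ q.roots.filter (fun w => v < w) := by rw [hw0]; simp
    exact (Multiset.mem_filter.1 this).2
  have hprod : ((q.roots.map fun w => v - w)).prod
      = (v - w0) * ((q.roots.filter (fun w => ¬ v < w)).map fun w => v - w).prod := by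
    conv_lhs => rw [← hsplit]
    rw [Multiset.map_add, Multiset.prod_add, hw0]
    simp
  rw [heval, hprod]
  have h1 : v - w0 ≤ 0 := by linarith
  have h2 : 0 ≤ ((q.roots.filter (fun w => ¬ v < w)).map fun w => v - w).prod := by
    apply prod_nonneg
    intro y hy
    obtain ⟨w, hw, rfl⟩ := Multiset.mem_map.1 hy
    have := (Multiset.mem_filter.1 hw).2
    simp only [not_lt] at this
    linarith
  have h3 := mul_nonpos_iff.2 (Or.inr ⟨h1, h2⟩)
  nlinarith

end GammaAux

namespace GammaAux
open Polynomial

lemma iterate_derivative_linear_mul (a : ℝ) (Q : ℝ[X]) (d : ℕ) :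
    derivative^[d+1] ((X + C a) * Q)
      = (X + C a) * derivative^[d+1] Q + ((d:ℝ[X])+1) * derivative^[d] Q := by
  induction d with
  | zero =>
    simp only [Function.iterate_one, derivative_mul, derivative_X_add_C, one_mul,
      Function.iterate_zero_apply, Nat.cast_zero, zero_add]
    ring
  | succ d ih =>
    have hC : derivative ((d:ℝ[X]) + 1) = 0 := by
      rw [derivative_add, derivative_natCast, derivative_one, add_zero]
    rw [Function.iterate_succ_apply' derivative (d+1) ((X + C a) * Q), ih, derivative_add,
      derivative_mul, derivative_mul, derivative_X_add_C, hC,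
      Function.iterate_succ_apply' derivative (d+1) Q,
      Function.iterate_succ_apply' derivative d Q]
    push_cast
    ring

lemma multiset_esymm_zero (T : Multiset ℝ) : T.esymm 0 = 1 := by
  simp [Multiset.esymm, Multiset.powersetCard_zero_left]

/-- Key lemma: removing a maximal element from `Γ_k` lands in `Γ_{k-1}`. -/
lemma gamma_erase_max (k : ℕ) (hk2 : 2 ≤ k) (M' : Multiset ℝ) (a : ℝ)
    (hkle : k ≤ Multiset.card M' + 1)
    (hΓ : ∀ j, 1 ≤ j → j ≤ k → 0 < (a ::ₘ M').esymm j) :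
    ∀ j, 1 ≤ j → j ≤ k - 1 → 0 < M'.esymm j := by
  set m' := Multiset.card M' with hm'
  set d := m' + 1 - k with hd
  have hdm : d + k = m' + 1 := by omega
  set P := PM (a ::ₘ M') with hP
  set Q := PM M' with hQ
  have hPQ : P = (X + C a) * Q := by rw [hP, hQ, PM, PM, Multiset.map_cons, Multiset.prod_cons]
  have hcardM : Multiset.card (a ::ₘ M') = m' + 1 := by simp [hm']
  have hPdeg : P.natDegree = m' + 1 := by rw [hP, PM_natDegree, hcardM]
  have hQdeg : Q.natDegree = m' := by rw [hQ, PM_natDegree, hm']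
  -- positivity of all relevant coefficients of derivative^[d] P
  have hcoeffP : ∀ i, i ≤ k → 0 < (derivative^[d] P).coeff i := by
    intro i hik
    rw [coeff_iterate_derivative, nsmul_eq_mul]
    have hle : i + d ≤ m' + 1 := by omega
    rw [hP, PM_coeff _ (by rwa [hcardM]), hcardM]
    have hidx : m' + 1 - (i + d) = k - i := by omega
    rw [hidx]
    have hesym : 0 < (a ::ₘ M').esymm (k - i) := by
      rcases eq_or_lt_of_le hik with rfl | hik'
      · rw [Nat.sub_self, multiset_esymm_zero]; norm_num
      · exact hΓ (k - i) (by omega) (by omega)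
    have hdf : 0 < ((i + d).descFactorial d : ℝ) := by
      have h0 : (i + d).descFactorial d ≠ 0 := by
        simp only [Ne, Nat.descFactorial_eq_zero_iff_lt]; omega
      exact_mod_cast Nat.pos_of_ne_zero h0
    exact mul_pos hdf hesym
  have hevalP : ∀ t : ℝ, 0 ≤ t → 0 < (derivative^[d] P).eval t := by
    intro t ht
    apply eval_pos_of_coeffs _ (hcoeffP 0 (by omega)) _ ht
    intro i
    rcases le_or_gt i k with h | h
    · exact (hcoeffP i h).le
    · rw [coeff_iterate_derivative, nsmul_eq_mul,
        coeff_eq_zero_of_natDegree_lt (by omega : P.natDegree < i + d), mul_zero]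
  -- all roots of derivative^[d] Q are negative
  have hQsplits : Q.Splits := by rw [hQ]; exact PM_splits M'
  have hW'splits := splits_iterate_derivative hQsplits d
  have hW'neg : ∀ v ∈ (derivative^[d] Q).roots, v < 0 := by
    intro v hv
    by_contra hv0
    push_neg at hv0
    have hrne : (derivative^[d] Q).roots ≠ 0 := by
      intro h0; rw [h0] at hv; exact Multiset.notMem_zero v hv
    obtain ⟨vm, hvm, hvmax⟩ := exists_max _ hrne
    have hvm0 : (0:ℝ) ≤ vm := le_trans hv0 (hvmax v hv)
    have h2 := hevalP vm hvm0
    rcases Nat.eq_zero_or_pos d with hd0 | hdpos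
    · have h3 : Q.eval vm = 0 := by
        have := (mem_roots'.1 hvm).2
        rwa [hd0, Function.iterate_zero_apply] at this
      rw [hd0, Function.iterate_zero_apply, hPQ, eval_mul, h3, mul_zero] at h2
      exact lt_irrefl 0 h2
    · set W := derivative^[d-1] Q with hW
      have hWW' : derivative W = derivative^[d] Q := by
        rw [hW, ← Function.iterate_succ_apply' derivative (d-1) Q]
        congr 1
        omega
      have hWsplits := splits_iterate_derivative hQsplits (d-1)
      have hQm' : Q.coeff m' = 1 := by
        have := (PM_monic M').coeff_natDegree
        rwa [← hQ, hQdeg] at this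
      have hcoeffWk : W.coeff k = ((k + (d-1)).descFactorial (d-1) : ℝ) * Q.coeff (k + (d-1)) := by
        rw [hW, coeff_iterate_derivative, nsmul_eq_mul]
      have hkd : k + (d - 1) = m' := by omega
      have hWk : 0 < W.coeff k := by
        rw [hcoeffWk, hkd, hQm', mul_one]
        have h0 : m'.descFactorial (d-1) ≠ 0 := by
          simp only [Ne, Nat.descFactorial_eq_zero_iff_lt]; omega
        exact_mod_cast Nat.pos_of_ne_zero h0
      have hWdeg : W.natDegree = k := by
        apply le_antisymm
        · exact (natDegree_iterate_derivative _ _).trans (by omega)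
        · exact le_natDegree_of_ne_zero hWk.ne'
      have hWlc : 0 < W.leadingCoeff := by rwa [leadingCoeff, hWdeg]
      have hWvm : W.eval vm ≤ 0 :=
        eval_nonpos_at_max_deriv_root hWsplits hWlc (by rw [hWW']; exact hvm)
          (by rw [hWW']; exact hvmax)
      have hL : derivative^[d] P = (X + C a) * derivative^[d] Q
          + (((d-1:ℕ):ℝ[X])+1) * derivative^[d-1] Q := by
        have h := iterate_derivative_linear_mul a Q (d-1)
        rw [← hPQ] at h
        have : d - 1 + 1 = d := by omega
        rwa [this] at h
      have hevalvm : (derivative^[d] P).eval vm = ((d:ℝ)) * W.eval vm := by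
        rw [hL, eval_add, eval_mul, (mem_roots'.1 hvm).2, mul_zero, zero_add, eval_mul, hW]
        have : ((((d-1:ℕ):ℝ[X]))+1).eval vm = (d:ℝ) := by
          simp only [eval_add, eval_natCast, eval_one]
          have : (d:ℝ) - 1 + 1 = d := by ring
          push_cast [Nat.cast_sub (by omega : 1 ≤ d)]
          ring
        rw [this]
      rw [hevalvm] at h2
      have hdpos' : 0 < (d:ℝ) := by exact_mod_cast hdpos
      nlinarith
  -- conclude : the coefficients of derivative^[d] Q are positive, hence esymm M' positive
  intro j hj1 hjk
  have hW'coeff : ∀ i, i + d ≤ m' →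
      (derivative^[d] Q).coeff i = ((i + d).descFactorial d : ℝ) * M'.esymm (m' - (i + d)) := by
    intro i hi
    rw [coeff_iterate_derivative, nsmul_eq_mul, hQ, PM_coeff _ (by omega), ← hm']
  have hW'k1 : 0 < (derivative^[d] Q).coeff (k-1) := by
    rw [hW'coeff (k-1) (by omega)]
    have h1 : m' - (k - 1 + d) = 0 := by omega
    rw [h1, multiset_esymm_zero, mul_one]
    have h0 : (k - 1 + d).descFactorial d ≠ 0 := by
      simp only [Ne, Nat.descFactorial_eq_zero_iff_lt]; omega
    exact_mod_cast Nat.pos_of_ne_zero h0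
  have hW'deg : (derivative^[d] Q).natDegree = k - 1 := by
    apply le_antisymm
    · exact (natDegree_iterate_derivative _ _).trans (by omega)
    · exact le_natDegree_of_ne_zero hW'k1.ne'
  have hW'lc : 0 < (derivative^[d] Q).leadingCoeff := by
    rwa [leadingCoeff, hW'deg]
  have hW'card : Multiset.card (derivative^[d] Q).roots = k - 1 := by
    rw [splits_iff_card_roots.1 hW'splits, hW'deg]
  -- representation with roots
  have hposcoeff : 0 < (derivative^[d] Q).coeff (k-1-j) := by
    have hrepr := Splits.eq_prod_roots hW'splits
    have hPMfor : (Multiset.map (fun a => X - C a) (derivative^[d] Q).roots).prod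
        = PM ((derivative^[d] Q).roots.map Neg.neg) := by
      rw [PM_eq, Multiset.map_map, Multiset.map_map]
      congr 1
      apply Multiset.map_congr rfl
      intro w _
      simp
    rw [hrepr, hPMfor, coeff_C_mul,
      PM_coeff _ (by rw [Multiset.card_map, hW'card]; omega)]
    apply mul_pos hW'lc
    apply esymm_pos
    · intro y hy
      obtain ⟨w, hw, rfl⟩ := Multiset.mem_map.1 hy
      simpa using hW'neg w hw
    · rw [Multiset.card_map]; omega
  rw [hW'coeff (k-1-j) (by omega)] at hposcoeff
  have hidx : m' - (k - 1 - j + d) = j := by omega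
  rw [hidx] at hposcoeff
  have hdf : 0 < ((k - 1 - j + d).descFactorial d : ℝ) := by
    have h0 : (k - 1 - j + d).descFactorial d ≠ 0 := by
      simp only [Ne, Nat.descFactorial_eq_zero_iff_lt]; omega
    exact_mod_cast Nat.pos_of_ne_zero h0
  nlinarith

end GammaAux

namespace GammaAux

lemma multiset_esymm_one (T : Multiset ℝ) : T.esymm 1 = T.sum := by
  rw [Multiset.esymm, Multiset.powersetCard_one, Multiset.map_map]
  simp [Function.comp_def]

lemma gamma_sum_nonneg : ∀ (k : ℕ) (M N : Multiset ℝ), 1 ≤ k →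
    k + Multiset.card N = Multiset.card M + 1 →
    (∀ j, 1 ≤ j → j ≤ k → 0 < M.esymm j) → N ≤ M → 0 ≤ N.sum := by
  intro k
  induction k with
  | zero => intro M N h1; omega
  | succ k ih =>
    intro M N _ hcard hΓ hNM
    rcases Nat.eq_zero_or_pos k with rfl | hk1
    · -- k + 1 = 1 : N = M and the sum is σ₁ > 0
      have hNM' : N = M := Multiset.eq_of_le_of_card_le hNM (by omega)
      subst hNM'
      have h := hΓ 1 le_rfl le_rfl
      rw [multiset_esymm_one] at h
      exact h.le
    · rcases Nat.eq_zero_or_pos (Multiset.card N) with hN0 | hNpos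
      · rw [Multiset.card_eq_zero.1 hN0]
        simp
      · have hMN : Multiset.card (M - N) = k := by
          rw [Multiset.card_sub hNM]; omega
        obtain ⟨b, hb⟩ := Multiset.exists_mem_of_ne_zero
          (by rw [Ne, ← Multiset.card_eq_zero, hMN]; omega : M - N ≠ 0)
        have hbM : b ∈ M := Multiset.mem_of_le (tsub_le_self) hb
        have hNM' : N ≤ M.erase b := by
          rw [Multiset.le_iff_count]
          intro x
          rcases eq_or_ne x b with rfl | hx
          · rw [Multiset.count_erase_self]
            have h1 := Multiset.count_le_of_le x hNM
            have h2 : 1 ≤ Multiset.count x (M - N) := Multiset.count_pos.2 hb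
            rw [Multiset.count_sub] at h2
            omega
          · rw [Multiset.count_erase_of_ne hx]
            exact Multiset.count_le_of_le x hNM
        have hcardb : Multiset.card (M.erase b) = Multiset.card M - 1 := by
          rw [Multiset.card_erase_of_mem hbM, Nat.pred_eq_sub_one]
        apply ih (M.erase b) N hk1 (by omega) ?_ hNM'
        intro j hj1 hjk
        refine gamma_erase_max (k+1) (by omega) (M.erase b) b (by omega) ?_ j hj1 (by omega)
        intro j' hj1' hjk'
        rw [Multiset.cons_erase hbM]
        exact hΓ j' hj1' hjk'

end GammaAux

/-- If `β ∈ Γ_k ⊂ ℝⁿ`, then the sum of any `n - k + 1` of its coordinates is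
nonnegative. -/
theorem sum_nonneg_of_gammaCone (n k : ℕ) (β : Fin n → ℝ)
    (hΓ : ∀ j, 1 ≤ j → j ≤ k → 0 < esym n j β)
    (s : Finset (Fin n)) (hs : s.card = n - k + 1) :
    0 ≤ ∑ i ∈ s, β i := by
  have hesym : ∀ j, esym n j β = (Multiset.map β Finset.univ.val).esymm j := by
    intro j
    rw [Finset.esymm_map_val]
    rfl
  rcases Nat.eq_zero_or_pos k with rfl | hk1
  · exfalso
    have h1 : s.card ≤ n := by simpa using s.card_le_univ
    omega
  rcases le_or_gt k n with hkn | hkn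
  · have hsum : ∑ i ∈ s, β i = (s.val.map β).sum := rfl
    rw [hsum]
    apply GammaAux.gamma_sum_nonneg k (Finset.univ.val.map β) (s.val.map β) hk1
    · simp only [Multiset.card_map]
      rw [show Multiset.card s.val = s.card from rfl,
        show Multiset.card (Finset.univ : Finset (Fin n)).val = n from by simp]
      omega
    · intro j hj1 hjk
      rw [← hesym j]
      exact hΓ j hj1 hjk
    · exact Multiset.map_le_map (Finset.val_le_iff.2 (Finset.subset_univ s))
  · exfalso
    have h := hΓ (n+1) (by omega) (by omega)
    rw [esym, Finset.powersetCard_eq_empty.2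
        (by simp : (Finset.univ : Finset (Fin n)).card < n + 1),
      Finset.sum_empty] at h
    exact lt_irrefl 0 h
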